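/- arXiv:2505.22055 — 8 statements merged into one kernel-verified Lean document; each statement's English description precedes it below -/
import Mathlib

section
/- Let q be a prime power, m < n positive integers, and x_1, ..., x_m elements of F_{q^n}. The Moore determinant det(M), where M is the m×m matrix with entries M_{i,j} = x_j^{q^{i-1}}, equals 0 if and only if x_1, ..., x_m are linearly dependent over F_q. -/
/-- The Moore determinant of `x_1, ..., x_m ∈ F_{q^n}` vanishes iff the `x_i` are
linearly dependent over the subfield `F_q`. -/
theorem moore_det_eq_zero_iff (q n m : ℕ) (hq : IsPrimePow q) (hm : 0 < m) (hmn : m < n)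
    (K F : Type) [Field K] [Field F] [Algebra K F] [Fintype K] [Fintype F]
    (hK : Fintype.card K = q) (hF : Fintype.card F = q ^ n)
    (x : Fin m → F) :
    Matrix.det (Matrix.of fun i j : Fin m => x j ^ q ^ (i : ℕ)) = 0 ↔
      ¬ LinearIndependent K x := by
  classical
  have hq2 : 2 ≤ q := hq.two_le
  obtain ⟨p, k, hp, hk, rfl⟩ := hq
  have hpp : p.Prime := Nat.prime_iff.mpr hp
  haveI : Fact p.Prime := ⟨hpp⟩
  -- characteristic of F is p
  have hcharF : CharP F p := by
    obtain ⟨p', hcp'⟩ := CharP.exists F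
    obtain ⟨e, hp'pr, hcard⟩ := @FiniteField.card F _ _ p' hcp'
    have : p' = p := by
      have : p' ∣ (p ^ k) ^ n := by
        rw [← hF, hcard]; exact dvd_pow_self p' e.2.ne'
      rw [← pow_mul] at this
      exact (Nat.prime_dvd_prime_iff_eq hp'pr hpp).mp (hp'pr.dvd_of_dvd_pow this)
    rwa [this] at hcp'
  haveI := hcharF
  -- key: algebraMap of K is fixed by q-power maps
  have halg : ∀ (c : K) (i : ℕ), (algebraMap K F c) ^ (p ^ k) ^ i = algebraMap K F c := by
    intro c i
    rw [← map_pow]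
    congr 1
    have := FiniteField.pow_card_pow i c
    rwa [hK] at this
  have hqpow : ∀ i : ℕ, ((p ^ k) ^ i) = p ^ (k * i) := fun i => by rw [← pow_mul]
  constructor
  · -- det = 0 → dependent
    intro hdet hind
    obtain ⟨v, hv0, hv⟩ := (Matrix.exists_vecMul_eq_zero_iff).mpr hdet
    -- the q-polynomial with coefficients v
    set P : Polynomial F := ∑ i : Fin m, Polynomial.C (v i) * Polynomial.X ^ ((p ^ k) ^ (i : ℕ))
      with hP
    obtain ⟨i0, hi0⟩ := Function.ne_iff.mp hv0
    have hPne : P ≠ 0 := by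
      intro h
      apply hi0
      have := congrArg (fun Q => Polynomial.coeff Q ((p ^ k) ^ (i0 : ℕ))) h
      simp only [hP, Polynomial.finset_sum_coeff, Polynomial.coeff_C_mul,
        Polynomial.coeff_X_pow, Polynomial.coeff_zero] at this
      rw [Finset.sum_eq_single i0] at this
      · simpa using this
      · intro b _ hb
        rw [if_neg, mul_zero]
        intro hbe
        exact hb (Fin.ext (Nat.pow_right_injective hq2 hbe.symm))
      · simp
    have hPdeg : P.natDegree ≤ (p ^ k) ^ (m - 1) := by
      apply Polynomial.natDegree_sum_le_of_forall_le
      intro i _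
      apply le_trans (Polynomial.natDegree_C_mul_le _ _)
      rw [Polynomial.natDegree_X_pow]
      exact Nat.pow_le_pow_right (by positivity) (by omega)
    -- the kernel of the q-polynomial as a K-submodule
    let W : Submodule K F :=
      { carrier := {a | ∑ i : Fin m, v i * a ^ ((p ^ k) ^ (i : ℕ)) = 0}
        add_mem' := by
          intro a b ha hb
          simp only [Set.mem_setOf_eq] at *
          have : ∀ i : Fin m, (a + b) ^ ((p ^ k) ^ (i : ℕ))
              = a ^ ((p ^ k) ^ (i : ℕ)) + b ^ ((p ^ k) ^ (i : ℕ)) := by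
            intro i
            rw [hqpow]
            exact add_pow_char_pow a b p (k * (i : ℕ))
          simp only [this, mul_add, Finset.sum_add_distrib, ha, hb, add_zero]
        zero_mem' := by
          simp only [Set.mem_setOf_eq]
          have : ∀ i : Fin m, (0 : F) ^ ((p ^ k) ^ (i : ℕ)) = 0 := fun i =>
            zero_pow (by positivity)
          simp [this]
        smul_mem' := by
          intro c a ha
          simp only [Set.mem_setOf_eq, Algebra.smul_def] at *
          have : ∀ i : Fin m, (algebraMap K F c * a) ^ ((p ^ k) ^ (i : ℕ))
              = algebraMap K F c * a ^ ((p ^ k) ^ (i : ℕ)) := by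
            intro i; rw [mul_pow, halg]
          calc ∑ i : Fin m, v i * (algebraMap K F c * a) ^ ((p ^ k) ^ (i : ℕ))
              = algebraMap K F c * ∑ i : Fin m, v i * a ^ ((p ^ k) ^ (i : ℕ)) := by
                rw [Finset.mul_sum]
                exact Finset.sum_congr rfl fun i _ => by rw [this i]; ring
            _ = 0 := by rw [ha, mul_zero] }
    have hmem : ∀ j, x j ∈ W := by
      intro j
      have := congrFun hv j
      simpa [Matrix.vecMul, dotProduct, W] using this
    haveI : Fintype W := Fintype.ofFinite W
    haveI : Module.Finite K W := Module.Finite.of_finite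
    have hy : LinearIndependent K (fun j => (⟨x j, hmem j⟩ : W)) :=
      LinearIndependent.of_comp W.subtype hind
    have h1 : m ≤ Module.finrank K W := by
      simpa using hy.fintype_card_le_finrank
    have hroots : ∀ a : F, a ∈ W → P.IsRoot a := by
      intro a ha
      have ha' : ∑ i : Fin m, v i * a ^ ((p ^ k) ^ (i : ℕ)) = 0 := ha
      simp only [Polynomial.IsRoot, hP, Polynomial.eval_finset_sum, Polynomial.eval_mul,
        Polynomial.eval_C, Polynomial.eval_pow, Polynomial.eval_X]
      exact ha'
    have hcardW : Fintype.card W ≤ P.natDegree := by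
      have h2 : Fintype.card W ≤ P.roots.toFinset.card := by
        have := Fintype.card_le_of_injective
          (fun a : W => (⟨a.1, by
            rw [Multiset.mem_toFinset, Polynomial.mem_roots hPne]
            exact hroots a.1 a.2⟩ : (P.roots.toFinset : Finset F)))
          (fun a b hab => by
            have h2 := congrArg (fun t : (P.roots.toFinset : Finset F) => (t : F)) hab
            exact Subtype.ext h2)
        rwa [Fintype.card_coe] at this
      exact h2.trans ((Multiset.toFinset_card_le _).trans
        (Multiset.card_le_card (le_refl _) |>.trans (Polynomial.card_roots' P)))
    have hpow : (p ^ k) ^ Module.finrank K W ≤ (p ^ k) ^ (m - 1) := by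
      have hc := Module.card_eq_pow_finrank (K := K) (V := W)
      rw [hK] at hc
      rw [← hc]
      exact hcardW.trans hPdeg
    have hfr : Module.finrank K W ≤ m - 1 := by
      exact (Nat.pow_le_pow_iff_right hq2).mp hpow
    omega
  · -- dependent → det = 0
    intro hdep
    obtain ⟨g, hg, i0, hgi0⟩ := Fintype.not_linearIndependent_iff.mp hdep
    rw [← Matrix.exists_mulVec_eq_zero_iff]
    refine ⟨fun j => algebraMap K F (g j), ?_, ?_⟩
    · intro h
      apply hgi0
      have := congrFun h i0
      simpa using (RingHom.injective (algebraMap K F)) (by simpa using this)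
    · funext i
      simp only [Matrix.mulVec, dotProduct, Matrix.of_apply, Pi.zero_apply]
      have : ∀ j : Fin m, x j ^ (p ^ k) ^ (i : ℕ) * algebraMap K F (g j)
          = (algebraMap K F (g j) * x j) ^ ((p ^ k) ^ (i : ℕ)) := by
        intro j; rw [mul_pow, halg, mul_comm]
      rw [Finset.sum_congr rfl (fun j _ => this j)]
      have := sum_pow_char_pow (p := p) (n := k * (i : ℕ)) Finset.univ
        (fun j : Fin m => algebraMap K F (g j) * x j)
      rw [hqpow]
      rw [← this]
      have hsum : ∑ j : Fin m, algebraMap K F (g j) * x j = 0 := by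
        rw [← hg]; exact Finset.sum_congr rfl fun j _ => (Algebra.smul_def _ _).symm
      rw [hsum, zero_pow (pow_pos hpp.pos _).ne']
end

section
/- Let q be a prime power and m < n. The map assigning to each m-dimensional F_q-subspace S of F_{q^n} the coset of det(M(x_1,...,x_m)) in F_{q^n}^*/F_q^* (for any basis x_1,...,x_m of S) is a well-defined proper coloring of the Grassmann graph J_q(n,m): any two distinct m-spaces intersecting in an (m-1)-space receive distinct cosets. -/
/-- The Moore determinant of a basis of an `m`-space `S`. -/
def mooreDet {F : Type} [Field F] (q m : ℕ) (x : Fin m → F) : F :=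
  Matrix.det (Matrix.of fun i j : Fin m => x j ^ q ^ (i : ℕ))

section
variable {K F : Type} [Field K] [Field F] [Algebra K F] [Fintype K] {q : ℕ}

/-- cofactors of the last column of the Moore matrix of `Fin.snoc z w`. -/
def mooreCof (q : ℕ) {F : Type} [Field F] {m : ℕ} (z : Fin m → F) (i : Fin (m + 1)) : F :=
  (-1) ^ ((i : ℕ) + m) *
    Matrix.det (Matrix.of fun r c : Fin m => z c ^ q ^ ((i.succAbove r : Fin (m + 1)) : ℕ))

lemma mooreDet_snoc {m : ℕ} (z : Fin m → F) (w : F) :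
    mooreDet q (m + 1) (Fin.snoc z w) = ∑ i : Fin (m + 1), mooreCof q z i * w ^ q ^ (i : ℕ) := by
  rw [mooreDet, Matrix.det_succ_column _ (Fin.last m)]
  refine Finset.sum_congr rfl fun i _ => ?_
  rw [mooreCof]
  have hsub : (Matrix.of fun i j : Fin (m+1) => Fin.snoc z w j ^ q ^ (i : ℕ)).submatrix
      i.succAbove Fin.castSucc =
      Matrix.of fun r c : Fin m => z c ^ q ^ ((i.succAbove r : Fin (m + 1)) : ℕ) := by
    ext r c; simp
  rw [Fin.succAbove_last, hsub]
  simp only [Matrix.of_apply, Fin.snoc_last, Fin.val_last]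
  ring

lemma mooreCof_last {m : ℕ} (z : Fin m → F) : mooreCof q z (Fin.last m) = mooreDet q m z := by
  rw [mooreCof, mooreDet]
  simp [Fin.succAbove_last, Even.neg_one_pow ⟨m, rfl⟩]

lemma mooreDet_snoc_self {m : ℕ} (z : Fin m → F) (k : Fin m) :
    mooreDet q (m + 1) (Fin.snoc z (z k)) = 0 := by
  rw [mooreDet, ← Matrix.det_transpose]
  refine Matrix.det_zero_of_row_eq (i := k.castSucc) (j := Fin.last m)
    (Fin.castSucc_lt_last k).ne (funext fun i => ?_)
  simp

end

section
variable {K F : Type} [Field K] [Field F] [Algebra K F] [Fintype K] {q : ℕ}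

lemma moore_pow_add (hK : Fintype.card K = q) (i : ℕ) (a b : F) :
    (a + b) ^ q ^ i = a ^ q ^ i + b ^ q ^ i := by
  obtain ⟨d, hp, hcard⟩ := FiniteField.card K (ringChar K)
  haveI : Fact (ringChar K).Prime := ⟨hp⟩
  haveI : CharP F (ringChar K) :=
    charP_of_injective_algebraMap (algebraMap K F).injective (ringChar K)
  rw [← hK, hcard, ← pow_mul]
  exact add_pow_char_pow ..

lemma moore_pow_smul (hK : Fintype.card K = q) (i : ℕ) (c : K) (a : F) :
    (c • a) ^ q ^ i = c • a ^ q ^ i := by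
  rw [Algebra.smul_def, Algebra.smul_def, mul_pow, ← map_pow, ← hK,
    FiniteField.pow_card_pow]

/-- The `q^i`-power Frobenius as a `K`-linear map. -/
def moorePsi (hK : Fintype.card K = q) (i : ℕ) : F →ₗ[K] F where
  toFun a := a ^ q ^ i
  map_add' := moore_pow_add hK i
  map_smul' c a := by simpa using moore_pow_smul hK i c a

@[simp] lemma moorePsi_apply (hK : Fintype.card K = q) (i : ℕ) (a : F) :
    moorePsi (F := F) hK i a = a ^ q ^ i := rfl

lemma mooreDet_mul (hK : Fintype.card K = q) {m : ℕ} (x : Fin m → F)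
    (A : Matrix (Fin m) (Fin m) K) :
    mooreDet q m (fun j => ∑ k, A k j • x k) =
      mooreDet q m x * algebraMap K F A.det := by
  have hmat : (Matrix.of fun i j : Fin m => (∑ k, A k j • x k) ^ q ^ (i : ℕ)) =
      (Matrix.of fun i j : Fin m => x j ^ q ^ (i : ℕ)) * A.map (algebraMap K F) := by
    ext i j
    simp only [Matrix.of_apply, Matrix.mul_apply, Matrix.map_apply]
    rw [← moorePsi_apply (F := F) hK i, map_sum]
    refine Finset.sum_congr rfl fun k _ => ?_
    rw [LinearMap.map_smul, moorePsi_apply, Algebra.smul_def, mul_comm]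
  rw [mooreDet, hmat, Matrix.det_mul, ← mooreDet, RingHom.map_det, RingHom.mapMatrix_apply]

lemma mooreDet_snoc_zero_of_mem (hK : Fintype.card K = q) {m : ℕ} (z : Fin m → F) {w : F}
    (hw : w ∈ Submodule.span K (Set.range z)) :
    mooreDet q (m + 1) (Fin.snoc z w) = 0 := by
  obtain ⟨c, hc⟩ := (Submodule.mem_span_range_iff_exists_fun K).mp hw
  rw [mooreDet_snoc]
  have hw' : ∀ i : ℕ, w ^ q ^ i = ∑ k, c k • z k ^ q ^ i := by
    intro i
    rw [← hc, ← moorePsi_apply (F := F) hK i, map_sum]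
    simp
  calc ∑ i : Fin (m + 1), mooreCof q z i * w ^ q ^ (i : ℕ)
      = ∑ i : Fin (m + 1), ∑ k, c k • (mooreCof q z i * z k ^ q ^ (i : ℕ)) := by
        refine Finset.sum_congr rfl fun i _ => ?_
        rw [hw' i, Finset.mul_sum]
        exact Finset.sum_congr rfl fun k _ => mul_smul_comm _ _ _
    _ = ∑ k, c k • mooreDet q (m + 1) (Fin.snoc z (z k)) := by
        rw [Finset.sum_comm]
        exact Finset.sum_congr rfl fun k _ => by rw [mooreDet_snoc, Finset.smul_sum]
    _ = 0 := by simp [mooreDet_snoc_self]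

end

section
variable {K F : Type} [Field K] [Field F] [Algebra K F] [Fintype K] [Fintype F] {q : ℕ}

lemma mooreDet_ne_zero (hK : Fintype.card K = q) (hq : 1 < q) :
    ∀ {m : ℕ} (x : Fin m → F), LinearIndependent K x → mooreDet q m x ≠ 0 := by
  intro m
  induction m with
  | zero => intro x _; rw [mooreDet, Matrix.det_fin_zero]; exact one_ne_zero
  | succ m ih =>
    classical
    intro x hx
    rw [← Fin.snoc_init_self x] at hx ⊢
    rw [linearIndependent_fin_snoc] at hx
    obtain ⟨hz, hlast⟩ := hx
    set z := Fin.init x with hzdef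
    have hd : mooreDet q m z ≠ 0 := ih z hz
    set P : Polynomial F :=
      ∑ i : Fin (m + 1), Polynomial.C (mooreCof q z i) * Polynomial.X ^ q ^ (i : ℕ) with hP
    have heval : ∀ w : F, P.eval w = mooreDet q (m + 1) (Fin.snoc z w) := by
      intro w; rw [mooreDet_snoc, hP]; simp [Polynomial.eval_finset_sum]
    have hcoeff : P.coeff (q ^ m) = mooreDet q m z := by
      rw [hP, Polynomial.finset_sum_coeff, Finset.sum_eq_single (Fin.last m)]
      · simp [Polynomial.coeff_C_mul, Polynomial.coeff_X_pow, mooreCof_last]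
      · intro i _ hi
        rw [Polynomial.coeff_C_mul, Polynomial.coeff_X_pow, if_neg, mul_zero]
        intro h
        have : (i : ℕ) = m := Nat.pow_right_injective hq h.symm
        exact hi (Fin.ext (by simp [this]))
      · simp
    have hPne : P ≠ 0 := fun h => hd (by rw [← hcoeff, h, Polynomial.coeff_zero])
    have hdeg : P.natDegree ≤ q ^ m := by
      refine Polynomial.natDegree_sum_le_of_forall_le _ _ fun i _ => ?_
      refine le_trans (Polynomial.natDegree_C_mul_le _ _) ?_
      rw [Polynomial.natDegree_X_pow]
      exact Nat.pow_le_pow_right (le_of_lt hq) (Fin.is_le i)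
    set W := Submodule.span K (Set.range z) with hW
    have hfr : Module.finrank K W = m := by
      rw [hW, finrank_span_eq_card hz]; simp
    have hWcard : Fintype.card W = q ^ m := by
      rw [Module.card_eq_pow_finrank (K := K) (V := W), hK, hfr]
    set T : Finset F := Set.toFinset (W : Set F) with hT
    have hTcard : T.card = q ^ m := by
      rw [hT, Set.toFinset_card]; simpa using hWcard
    have hsub : T ⊆ P.roots.toFinset := by
      intro a ha
      rw [Multiset.mem_toFinset, Polynomial.mem_roots hPne]
      rw [hT, Set.mem_toFinset] at ha
      rw [Polynomial.IsRoot, heval a]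
      exact mooreDet_snoc_zero_of_mem hK z ha
    have hcard_le : P.roots.toFinset.card ≤ q ^ m :=
      le_trans (Multiset.toFinset_card_le _) (le_trans (Polynomial.card_roots' P) hdeg)
    intro h0
    have hroot : x (Fin.last m) ∈ P.roots.toFinset := by
      rw [Multiset.mem_toFinset, Polynomial.mem_roots hPne]
      exact (heval _).trans h0
    have hTeq : T = P.roots.toFinset :=
      Finset.eq_of_subset_of_card_le hsub (by rw [hTcard]; exact hcard_le)
    rw [← hTeq, hT, Set.mem_toFinset] at hroot
    exact hlast hroot

lemma mooreDet_snoc_eq_zero_iff (hK : Fintype.card K = q) (hq : 1 < q) {m : ℕ}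
    (z : Fin m → F) (hz : LinearIndependent K z) (w : F) :
    mooreDet q (m + 1) (Fin.snoc z w) = 0 ↔ w ∈ Submodule.span K (Set.range z) := by
  constructor
  · intro h0
    by_contra hw
    exact mooreDet_ne_zero (K := K) hK hq (m := m + 1) (Fin.snoc z w)
      (linearIndependent_fin_snoc.mpr ⟨hz, hw⟩) h0
  · exact mooreDet_snoc_zero_of_mem hK z

omit [Fintype F] in
lemma mooreDet_snoc_sub_smul (hK : Fintype.card K = q) {m : ℕ} (z : Fin m → F)
    (u v : F) (β : K) :
    mooreDet q (m + 1) (Fin.snoc z (u - β • v)) =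
      mooreDet q (m + 1) (Fin.snoc z u) - β • mooreDet q (m + 1) (Fin.snoc z v) := by
  simp only [mooreDet_snoc]
  rw [Finset.smul_sum, ← Finset.sum_sub_distrib]
  refine Finset.sum_congr rfl fun i _ => ?_
  have h : (u - β • v) ^ q ^ (i : ℕ) = u ^ q ^ (i : ℕ) - β • v ^ q ^ (i : ℕ) := by
    rw [← moorePsi_apply (F := F) hK i, map_sub, LinearMap.map_smul]; rfl
  rw [h, mul_sub, mul_smul_comm]

end

section
variable {K F : Type} [Field K] [Field F] [Algebra K F] [Fintype K] {q : ℕ}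

lemma moore_well_defined (hK : Fintype.card K = q) {m : ℕ} (x y : Fin m → F)
    (hx : LinearIndependent K x) (hy : LinearIndependent K y)
    (hspan : Submodule.span K (Set.range x) = Submodule.span K (Set.range y)) :
    ∃ α : K, α ≠ 0 ∧ mooreDet q m x = algebraMap K F α * mooreDet q m y := by
  classical
  set S := Submodule.span K (Set.range y) with hS
  have hxS : ∀ i, x i ∈ S := fun i => by
    rw [← hspan]; exact Submodule.subset_span ⟨i, rfl⟩
  have hyS : ∀ i, y i ∈ S := fun i => Submodule.subset_span ⟨i, rfl⟩
  set x' : Fin m → S := fun i => ⟨x i, hxS i⟩ with hx'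
  set y' : Fin m → S := fun i => ⟨y i, hyS i⟩ with hy'
  have hx'li : LinearIndependent K x' := LinearIndependent.of_comp S.subtype hx
  have hy'li : LinearIndependent K y' := LinearIndependent.of_comp S.subtype hy
  have hx'span : Submodule.span K (Set.range x') = ⊤ := by
    apply Submodule.map_injective_of_injective S.injective_subtype
    rw [Submodule.map_span, Submodule.map_top, Submodule.range_subtype]
    have himg : S.subtype '' Set.range x' = Set.range x := by
      rw [← Set.range_comp]; rfl
    rw [himg, hspan]
  have hy'span : Submodule.span K (Set.range y') = ⊤ := by
    apply Submodule.map_injective_of_injective S.injective_subtype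
    rw [Submodule.map_span, Submodule.map_top, Submodule.range_subtype]
    have himg : S.subtype '' Set.range y' = Set.range y := by
      rw [← Set.range_comp]; rfl
    rw [himg]
  let B₁ : Module.Basis (Fin m) K S := Module.Basis.mk hx'li hx'span.ge
  let B₂ : Module.Basis (Fin m) K S := Module.Basis.mk hy'li hy'span.ge
  set A := B₂.toMatrix ⇑B₁ with hA
  have hdet : A.det ≠ 0 := by
    have h1 : B₂.toMatrix ⇑B₁ * B₁.toMatrix ⇑B₂ = 1 := Module.Basis.toMatrix_mul_toMatrix_flip B₂ B₁
    have h2 := congrArg Matrix.det h1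
    rw [Matrix.det_mul, Matrix.det_one] at h2
    exact left_ne_zero_of_mul_eq_one h2
  have hsum : ∀ j, x j = ∑ k, A k j • y k := by
    intro j
    have h1 : ∑ k, A k j • y' k = x' j := by
      have := Module.Basis.sum_toMatrix_smul_self B₂ ⇑B₁ j
      simpa [hA, B₁, B₂, Module.Basis.coe_mk] using this
    have h2 := congrArg Subtype.val h1
    simpa using h2.symm
  refine ⟨A.det, hdet, ?_⟩
  rw [show x = fun j => ∑ k, A k j • y k from funext hsum, mooreDet_mul hK y A, mul_comm]

end

/-- The coset of the Moore determinant in `F_{q^n}^*/F_q^*` is a well-defined proper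
coloring of the Grassmann graph `J_q(n,m)`: it is independent of the choice of basis,
and any two distinct `m`-spaces meeting in an `(m-1)`-space receive different cosets. -/
theorem moore_det_coloring (q n m : ℕ) (hq : IsPrimePow q) (hm : 0 < m) (hmn : m < n)
    (K F : Type) [Field K] [Field F] [Algebra K F] [Fintype K] [Fintype F]
    (hK : Fintype.card K = q) (hF : Fintype.card F = q ^ n) :
    -- well-definedness: any two bases of the same `m`-space give Moore determinants
    -- in the same coset of `F_{q^n}^*/F_q^*`
    (∀ S : Submodule K F, Module.finrank K S = m →
      ∀ x y : Fin m → F, LinearIndependent K x → LinearIndependent K y →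
        Submodule.span K (Set.range x) = S → Submodule.span K (Set.range y) = S →
          ∃ α : K, α ≠ 0 ∧ mooreDet q m x = algebraMap K F α * mooreDet q m y) ∧
    -- properness: adjacent vertices of `J_q(n,m)` receive distinct cosets
    (∀ S₁ S₂ : Submodule K F, Module.finrank K S₁ = m → Module.finrank K S₂ = m →
      S₁ ≠ S₂ → Module.finrank K ↥(S₁ ⊓ S₂) = m - 1 →
      ∀ x y : Fin m → F, LinearIndependent K x → LinearIndependent K y →
        Submodule.span K (Set.range x) = S₁ → Submodule.span K (Set.range y) = S₂ →
          ∀ α : K, mooreDet q m x ≠ algebraMap K F α * mooreDet q m y) := by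
  classical
  have hq2 : 1 < q := hq.two_le
  constructor
  · intro S hS x y hx hy hsx hsy
    exact moore_well_defined hK x y hx hy (hsx.trans hsy.symm)
  · intro S₁ S₂ h₁ h₂ hne hinf x y hx hy hsx hsy α heq
    obtain ⟨m', rfl⟩ : ∃ m', m = m' + 1 := ⟨m - 1, (Nat.succ_pred_eq_of_pos hm).symm⟩
    have hinf' : Module.finrank K ↥(S₁ ⊓ S₂) = m' := by simpa using hinf
    set W := S₁ ⊓ S₂ with hW
    let b : Module.Basis (Fin m') K W := Module.finBasisOfFinrankEq K W hinf'
    set z : Fin m' → F := fun i => (b i : F) with hz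
    have hzli : LinearIndependent K z :=
      b.linearIndependent.map' W.subtype (Submodule.ker_subtype W)
    have hzspan : Submodule.span K (Set.range z) = W := by
      have h : Set.range z = W.subtype '' Set.range ⇑b := by rw [← Set.range_comp]; rfl
      rw [h, ← Submodule.map_span, b.span_eq, Submodule.map_top, Submodule.range_subtype]
    have hn1 : ¬ S₁ ≤ W := by
      intro hle
      have h := Submodule.finrank_mono hle
      rw [h₁, hinf'] at h
      omega
    have hn2 : ¬ S₂ ≤ W := by
      intro hle
      have h := Submodule.finrank_mono hle
      rw [h₂, hinf'] at h
      omega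
    obtain ⟨u, huS₁, huW⟩ := SetLike.not_le_iff_exists.mp hn1
    obtain ⟨v, hvS₂, hvW⟩ := SetLike.not_le_iff_exists.mp hn2
    have hxuli : LinearIndependent K (Fin.snoc z u) :=
      linearIndependent_fin_snoc.mpr ⟨hzli, by rw [hzspan]; exact huW⟩
    have hyvli : LinearIndependent K (Fin.snoc z v) :=
      linearIndependent_fin_snoc.mpr ⟨hzli, by rw [hzspan]; exact hvW⟩
    have hxuspan : Submodule.span K (Set.range (Fin.snoc z u)) = S₁ := by
      apply Submodule.eq_of_le_of_finrank_eq
      · rw [Submodule.span_le]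
        rintro a ⟨i, rfl⟩
        induction i using Fin.lastCases with
        | last => simpa using huS₁
        | cast j => simpa using (inf_le_left : W ≤ S₁) (b j).2
      · rw [finrank_span_eq_card hxuli, h₁]; simp
    have hyvspan : Submodule.span K (Set.range (Fin.snoc z v)) = S₂ := by
      apply Submodule.eq_of_le_of_finrank_eq
      · rw [Submodule.span_le]
        rintro a ⟨i, rfl⟩
        induction i using Fin.lastCases with
        | last => simpa using hvS₂
        | cast j => simpa using (inf_le_right : W ≤ S₂) (b j).2
      · rw [finrank_span_eq_card hyvli, h₂]; simp
    obtain ⟨c₁, hc₁, he₁⟩ :=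
      moore_well_defined hK x (Fin.snoc z u) hx hxuli (hsx.trans hxuspan.symm)
    obtain ⟨c₂, hc₂, he₂⟩ :=
      moore_well_defined hK y (Fin.snoc z v) hy hyvli (hsy.trans hyvspan.symm)
    rw [he₁, he₂] at heq
    set β := c₁⁻¹ * (α * c₂) with hβ
    have hc₁' : algebraMap K F c₁ ≠ 0 := fun h => hc₁ ((algebraMap K F).injective (by simpa using h))
    have hDu : mooreDet q (m' + 1) (Fin.snoc z u) =
        algebraMap K F β * mooreDet q (m' + 1) (Fin.snoc z v) := by
      apply mul_left_cancel₀ hc₁'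
      rw [heq, hβ, _root_.map_mul, _root_.map_mul, map_inv₀]
      field_simp
    have hzero : mooreDet q (m' + 1) (Fin.snoc z (u - β • v)) = 0 := by
      rw [mooreDet_snoc_sub_smul hK, hDu, Algebra.smul_def, sub_self]
    have hmem : u - β • v ∈ W := by
      rw [← hzspan]
      exact (mooreDet_snoc_eq_zero_iff hK hq2 z hzli _).mp hzero
    have huS₂ : u ∈ S₂ := by
      have h4 : u - β • v ∈ S₂ := (inf_le_right : W ≤ S₂) hmem
      have h5 : β • v ∈ S₂ := S₂.smul_mem β hvS₂
      simpa using S₂.add_mem h4 h5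
    apply hne
    apply Submodule.eq_of_le_of_finrank_eq _ (by rw [h₁, h₂])
    rw [← hxuspan, Submodule.span_le]
    rintro a ⟨i, rfl⟩
    induction i using Fin.lastCases with
    | last => simpa using huS₂
    | cast j => simpa using (inf_le_right : W ≤ S₂) (b j).2
end

section
/- Let q = 2^e, k ≥ 1, and V = F_{q^{2k+1}} × F_q. Define g((x,x_1),(y,y_1)) = (x_1 y + y_1 x)^{q+1} + x y^q + x^q y ∈ F_{q^{2k+1}}. If z̄ = a_1 x̄ + a_2 ȳ and w̄ = b_1 x̄ + b_2 ȳ with a_1,a_2,b_1,b_2 ∈ F_q, then g(z̄, w̄) = α^2 (x_1 y + y_1 x)^{q+1} + α (x y^q + x^q y) where α = a_1 b_2 + a_2 b_1. -/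
/-- The bivariate function `g((x,x₁),(y,y₁)) = (x₁y + y₁x)^{q+1} + xy^q + x^q y`
on `V = F_{q^{2k+1}} × F_q`. -/
def gfun (K F : Type) [Field K] [Field F] [Algebra K F] (q : ℕ) (xb yb : F × K) : F :=
  (algebraMap K F xb.2 * yb.1 + algebraMap K F yb.2 * xb.1) ^ (q + 1) +
    xb.1 * yb.1 ^ q + xb.1 ^ q * yb.1

/-- For `z̄ = a₁x̄ + a₂ȳ` and `w̄ = b₁x̄ + b₂ȳ`, one has
`g(z̄,w̄) = α²(x₁y+y₁x)^{q+1} + α(xy^q + x^q y)` with `α = a₁b₂ + a₂b₁`. -/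
theorem gfun_on_span (e k : ℕ) (he : 1 ≤ e) (hk : 1 ≤ k)
    (K F : Type) [Field K] [Field F] [Algebra K F] [Fintype K] [Fintype F]
    (hK : Fintype.card K = 2 ^ e) (hF : Fintype.card F = (2 ^ e) ^ (2 * k + 1))
    (x y : F) (x₁ y₁ a₁ a₂ b₁ b₂ : K) :
    gfun K F (2 ^ e)
        (algebraMap K F a₁ * x + algebraMap K F a₂ * y, a₁ * x₁ + a₂ * y₁)
        (algebraMap K F b₁ * x + algebraMap K F b₂ * y, b₁ * x₁ + b₂ * y₁) =
      algebraMap K F ((a₁ * b₂ + a₂ * b₁) ^ 2) *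
          (algebraMap K F x₁ * y + algebraMap K F y₁ * x) ^ (2 ^ e + 1) +
        algebraMap K F (a₁ * b₂ + a₂ * b₁) * (x * y ^ (2 ^ e) + x ^ (2 ^ e) * y) := by
  -- characteristic 2
  have hchar : ringChar K = 2 := by
    rw [FiniteField.even_card_iff_char_two, hK]
    exact Nat.pow_mod 2 e 2 ▸ by simp [Nat.one_le_iff_ne_zero.mp he]
  haveI : CharP K 2 := hchar ▸ ringChar.charP K
  haveI : CharP F 2 := charP_of_injective_algebraMap' (A := F) K 2
  have h2 : (2 : F) = 0 := by exact_mod_cast CharP.cast_eq_zero F 2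
  -- Frobenius is additive
  have hfrob : ∀ u v : F, (u + v) ^ 2 ^ e = u ^ 2 ^ e + v ^ 2 ^ e := fun u v =>
    add_pow_char_pow (R := F) 2 e (x := u) (y := v)
  -- algebraMap elements are fixed by Frobenius
  have hfix : ∀ c : K, (algebraMap K F c) ^ 2 ^ e = algebraMap K F c := by
    intro c
    rw [← map_pow, ← hK, FiniteField.pow_card]
  set A := algebraMap K F with hA
  set α := a₁ * b₂ + a₂ * b₁ with hα
  -- the base of the first term
  have hbase : A (a₁ * x₁ + a₂ * y₁) * (A b₁ * x + A b₂ * y) +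
      A (b₁ * x₁ + b₂ * y₁) * (A a₁ * x + A a₂ * y) = A α * (A x₁ * y + A y₁ * x) := by
    simp only [map_add, map_mul, hα]
    linear_combination (A a₁ * A b₁ * A x₁ * x + A a₂ * A b₂ * A y₁ * y) * h2
  have hq1 : ∀ t : F, t ^ (2 ^ e + 1) = t ^ 2 ^ e * t := fun t => pow_succ t _
  have hwq : (A b₁ * x + A b₂ * y) ^ 2 ^ e = A b₁ * x ^ 2 ^ e + A b₂ * y ^ 2 ^ e := by
    rw [hfrob, mul_pow, mul_pow, hfix, hfix]
  have hzq : (A a₁ * x + A a₂ * y) ^ 2 ^ e = A a₁ * x ^ 2 ^ e + A a₂ * y ^ 2 ^ e := by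
    rw [hfrob, mul_pow, mul_pow, hfix, hfix]
  have h1term : (A α * (A x₁ * y + A y₁ * x)) ^ (2 ^ e + 1) =
      A (α ^ 2) * (A x₁ * y + A y₁ * x) ^ (2 ^ e + 1) := by
    rw [mul_pow, hq1 (A α), hfix, map_pow, sq]
  unfold gfun
  simp only []
  rw [hbase, h1term, hwq, hzq]
  simp only [map_add, map_mul, hα]
  linear_combination (A a₁ * A b₁ * x * x ^ 2 ^ e + A a₂ * A b₂ * y * y ^ 2 ^ e) * h2
end

section
/- Let q = 2^e, k ≥ 1, c ∈ F_q^*, and w ∈ F_{q^{2k+1}}. The only solution z ∈ F_{q^{2k+1}} of the equation c·z^{q+1} = w z^q + w^q z is z = 0. -/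
/-- For `q = 2^e`, `c ∈ F_q^*` and any `w ∈ F_{q^{2k+1}}`, the equation
`c·z^{q+1} = wz^q + w^q z` has only the solution `z = 0`. -/
theorem only_zero_solution_scaled (e k : ℕ) (he : 1 ≤ e) (hk : 1 ≤ k)
    (K F : Type) [Field K] [Field F] [Algebra K F] [Fintype K] [Fintype F]
    (hK : Fintype.card K = 2 ^ e) (hF : Fintype.card F = (2 ^ e) ^ (2 * k + 1))
    (c : K) (hc : c ≠ 0) (w z : F)
    (h : algebraMap K F c * z ^ (2 ^ e + 1) = w * z ^ (2 ^ e) + w ^ (2 ^ e) * z) :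
    z = 0 := by
  by_contra hz
  have h2F : (2 : F) = 0 := by
    have := FiniteField.cast_card_eq_zero F
    rw [hF] at this
    push_cast at this
    have h2 : (2 : F) ^ (e * (2 * k + 1)) = 0 := by
      rw [pow_mul]; exact_mod_cast this
    have hne : e * (2 * k + 1) ≠ 0 := by positivity
    exact (pow_eq_zero_iff hne).mp h2
  haveI hchar : CharP F 2 := by
    have hr : ringChar F = 2 := CharP.ringChar_of_prime_eq_zero Nat.prime_two h2F
    exact hr ▸ ringChar.charP F
  set c' := algebraMap K F c with hc'
  have fix : ∀ x : K, (algebraMap K F x) ^ 2 ^ e = algebraMap K F x := by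
    intro x
    rw [← map_pow, ← hK, FiniteField.pow_card]
  set u := w / z with hu'
  have hzq : z ^ 2 ^ e ≠ 0 := pow_ne_zero _ hz
  have hu : u ^ 2 ^ e = c' + u := by
    rw [hu', div_pow]
    field_simp
    linear_combination h + (w ^ 2 ^ e * z - z * z ^ 2 ^ e * c') * h2F
  have key : ∀ n : ℕ, u ^ (2 ^ e) ^ n = u + (n : F) * c' := by
    intro n
    induction n with
    | zero => simp
    | succ n ih =>
      rw [pow_succ, pow_mul, ih, add_pow_char_pow, hu]
      have : ((n : F) * c') ^ 2 ^ e = (n : F) * c' := by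
        have : (n : F) * c' = algebraMap K F ((n : K) * c) := by
          simp [hc']
        rw [this, fix]
      rw [this]
      push_cast
      ring
  have hcard := key (2 * k + 1)
  rw [← hF, FiniteField.pow_card] at hcard
  have hone : ((2 * k + 1 : ℕ) : F) = 1 := by
    push_cast
    rw [show (2 : F) * k = 0 by rw [h2F]; ring]
    ring
  rw [hone, one_mul] at hcard
  have hc0 : c' = 0 := by linear_combination -hcard
  exact hc ((algebraMap K F).injective (by rw [← hc', hc0, map_zero]))
end

section
/- Let q = 2^e, k ≥ 1, and let x̄ = (x, x_1), ȳ = (y, y_1) be F_q-linearly independent vectors in V = F_{q^{2k+1}} × F_q. Then the set E = { α^2 (x_1 y + y_1 x)^{q+1} + α (x y^q + x^q y) : α ∈ F_q } is closed under addition and has exactly q elements. -/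
section Aux

variable {e k : ℕ} {K F : Type} [Field K] [Field F] [Algebra K F] [Fintype K] [Fintype F]

/-- A finite field of cardinality `2^e` (with `e ≥ 1`) has characteristic 2. -/
lemma charK_two (he : 1 ≤ e) (hK : Fintype.card K = 2 ^ e) : CharP K 2 := by
  haveI : CharP K (ringChar K) := ringChar.charP K
  have hp : (ringChar K).Prime := CharP.char_is_prime K (ringChar K)
  have hdvd : ringChar K ∣ Fintype.card K := by
    classical
    exact (CharP.cast_eq_zero_iff K (ringChar K) (Fintype.card K)).mp (by
      exact_mod_cast FiniteField.cast_card_eq_zero K)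
  rw [hK] at hdvd
  have h2 : ringChar K = 2 := by
    have := hp.dvd_of_dvd_pow (n := e) (m := 2) hdvd
    exact (Nat.prime_dvd_prime_iff_eq hp Nat.prime_two).mp this
  rw [← h2]; exact ringChar.charP K

/-- Elements of `F` fixed by the `q`-power map lie in the image of `K`. -/
lemma fixed_mem_range (he : 1 ≤ e) (hK : Fintype.card K = 2 ^ e) (z : F)
    (hz : z ^ (2 ^ e) = z) : ∃ c : K, algebraMap K F c = z := by
  classical
  set q := 2 ^ e with hq
  set P : Polynomial F := Polynomial.X ^ q - Polynomial.X with hP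
  have hq1 : 1 < q := by
    rw [hq]; exact Nat.one_lt_two_pow_iff.mpr (by omega)
  have hcoeff : P.coeff q = 1 := by
    simp [hP, Polynomial.coeff_X_pow, Polynomial.coeff_X, hq1.ne, hq1.ne']
  have hP0 : P ≠ 0 := fun h => by simp [h] at hcoeff
  have hdeg : P.natDegree ≤ q := by
    refine le_trans (Polynomial.natDegree_sub_le _ _) ?_
    simp [Polynomial.natDegree_X_pow, hq1.le]
  set t : Finset F := Finset.univ.image (fun c : K => algebraMap K F c) with ht
  have hcardt : t.card = q := by
    rw [ht, Finset.card_image_of_injective _ (algebraMap K F).injective, Finset.card_univ, hK]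
  have hroot : ∀ w : F, w ^ q = w → w ∈ P.roots.toFinset := by
    intro w hw
    rw [Multiset.mem_toFinset, Polynomial.mem_roots hP0]
    simp [hP, Polynomial.IsRoot, hw]
  have hsub : t ⊆ P.roots.toFinset := by
    intro w hw
    rw [ht, Finset.mem_image] at hw
    obtain ⟨c, -, rfl⟩ := hw
    apply hroot
    rw [← map_pow, ← hK]; exact congrArg _ (FiniteField.pow_card c)
  have hcardle : P.roots.toFinset.card ≤ t.card := by
    rw [hcardt]
    exact le_trans (Multiset.toFinset_card_le _) (le_trans (Polynomial.card_roots' P) hdeg)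
  have heq : t = P.roots.toFinset := Finset.eq_of_subset_of_card_le hsub hcardle
  have hzmem : z ∈ t := by rw [heq]; exact hroot z hz
  rw [ht, Finset.mem_image] at hzmem
  obtain ⟨c, -, hc⟩ := hzmem
  exact ⟨c, hc⟩

/-- No Artin–Schreier root of 1: there is no `s` with `s^q + s = 1` when `[F:K]` is odd. -/
lemma no_AS_one [CharP F 2] (hK : Fintype.card K = 2 ^ e)
    (hF : Fintype.card F = (2 ^ e) ^ (2 * k + 1)) (s : F)
    (h : s ^ (2 ^ e) + s = 1) : False := by
  set q := 2 ^ e with hq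
  have hsq : s ^ q = 1 + s := by
    have := congrArg (· + s) h
    simpa [add_assoc, CharTwo.add_self_eq_zero] using this
  have hfix2 : s ^ (q ^ 2) = s := by
    rw [pow_two, pow_mul, hsq]
    rw [add_pow_char_pow (p := 2), one_pow, ← hq, hsq]
    rw [← add_assoc, CharTwo.add_self_eq_zero, zero_add]
  have hstep : ∀ j : ℕ, s ^ ((q ^ 2) ^ j) = s := by
    intro j
    induction j with
    | zero => simp
    | succ n ih => rw [pow_succ, pow_mul, ih, hfix2]
  have h1 : s ^ (q ^ (2 * k + 1)) = 1 + s := by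
    rw [pow_succ, pow_mul, pow_mul q 2 k, hstep k, hsq]
  have h2 : s ^ (q ^ (2 * k + 1)) = s := by
    rw [hq, ← hF]; exact FiniteField.pow_card s
  rw [h2] at h1
  have : (1 : F) = 0 := by
    have := congrArg (· + s) h1
    simpa [add_assoc, CharTwo.add_self_eq_zero] using this
  exact one_ne_zero this

/-- If `s^q + s` lands in the image of `K`, it must be zero. -/
lemma AS_in_K [CharP F 2] (hK : Fintype.card K = 2 ^ e)
    (hF : Fintype.card F = (2 ^ e) ^ (2 * k + 1)) (c : K) (s : F)
    (h : s ^ (2 ^ e) + s = algebraMap K F c) : c = 0 := by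
  by_contra hc
  set q := 2 ^ e with hq
  set t : F := algebraMap K F c⁻¹ * s with htdef
  have hfixinv : (algebraMap K F c⁻¹) ^ q = algebraMap K F c⁻¹ := by
    rw [← map_pow, ← hK, FiniteField.pow_card]
  have ht : t ^ q + t = 1 := by
    rw [htdef, mul_pow, hfixinv, ← mul_add, h, ← map_mul, inv_mul_cancel₀ hc, map_one]
  exact no_AS_one (k := k) hK hF t ht

end Aux

/-- For linearly independent `x̄ = (x,x₁)`, `ȳ = (y,y₁)` in `V = F_{q^{2k+1}} × F_q`
(`q = 2^e`), the set `E = {α²(x₁y+y₁x)^{q+1} + α(xy^q + x^q y) : α ∈ F_q}` is closed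
under addition and has exactly `q` elements. -/
theorem E_closed_and_card (e k : ℕ) (he : 1 ≤ e) (hk : 1 ≤ k)
    (K F : Type) [Field K] [Field F] [Algebra K F] [Fintype K] [Fintype F]
    (hK : Fintype.card K = 2 ^ e) (hF : Fintype.card F = (2 ^ e) ^ (2 * k + 1))
    (x y : F) (x₁ y₁ : K)
    (hind : LinearIndependent K ![(x, x₁), (y, y₁)] ) :
    (∀ u ∈ Set.range (fun α : K =>
        algebraMap K F (α ^ 2) * (algebraMap K F x₁ * y + algebraMap K F y₁ * x) ^ (2 ^ e + 1) +
          algebraMap K F α * (x * y ^ (2 ^ e) + x ^ (2 ^ e) * y)),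
      ∀ v ∈ Set.range (fun α : K =>
        algebraMap K F (α ^ 2) * (algebraMap K F x₁ * y + algebraMap K F y₁ * x) ^ (2 ^ e + 1) +
          algebraMap K F α * (x * y ^ (2 ^ e) + x ^ (2 ^ e) * y)),
        u + v ∈ Set.range (fun α : K =>
        algebraMap K F (α ^ 2) * (algebraMap K F x₁ * y + algebraMap K F y₁ * x) ^ (2 ^ e + 1) +
          algebraMap K F α * (x * y ^ (2 ^ e) + x ^ (2 ^ e) * y))) ∧
    (Set.range (fun α : K =>
        algebraMap K F (α ^ 2) * (algebraMap K F x₁ * y + algebraMap K F y₁ * x) ^ (2 ^ e + 1) +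
          algebraMap K F α * (x * y ^ (2 ^ e) + x ^ (2 ^ e) * y))).ncard = 2 ^ e := by
  classical
  haveI hcharK : CharP K 2 := charK_two he hK
  haveI hcharF : CharP F 2 := charP_of_injective_algebraMap (algebraMap K F).injective 2
  set q := 2 ^ e with hq
  set φ := algebraMap K F with hφ
  set A : F := φ x₁ * y + φ y₁ * x with hA
  set B : F := x * y ^ q + x ^ q * y with hB
  set f : K → F := fun α => φ (α ^ 2) * A ^ (q + 1) + φ α * B with hfdef
  have h2F : (2 : F) = 0 := by exact_mod_cast CharP.cast_eq_zero F 2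
  have hKfix : ∀ c : K, c ^ q = c := fun c => by rw [← hK]; exact FiniteField.pow_card c
  have hφfix : ∀ c : K, (φ c) ^ q = φ c := fun c => by rw [← map_pow, hKfix]
  have hfrob : ∀ a b : F, (a + b) ^ q = a ^ q + b ^ q := fun a b =>
    add_pow_char_pow ..
  -- additivity
  have hadd : ∀ α β : K, f α + f β = f (α + β) := by
    intro α β
    have hsq : (α + β) ^ 2 = α ^ 2 + β ^ 2 := add_pow_char ..
    simp only [hfdef, hsq, map_add]
    ring
  -- kernel is trivial
  have hker : ∀ α : K, f α = 0 → α = 0 := by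
    intro α hα
    by_contra hα0
    have hφα : φ α ≠ 0 := fun h => hα0 ((map_eq_zero φ).mp h)
    -- turn f α = 0 into φ α * A^(q+1) = B
    have h1 : φ α * A ^ (q + 1) = B := by
      have heq : φ (α ^ 2) * A ^ (q + 1) = φ α * B := by
        have := CharTwo.add_eq_iff_eq_add.mp hα
        simpa using this
      rw [pow_two, map_mul, mul_assoc] at heq
      exact mul_left_cancel₀ hφα heq
    have hAq : A ^ q = φ x₁ * y ^ q + φ y₁ * x ^ q := by
      rw [hA, hfrob, mul_pow, mul_pow, hφfix, hφfix]
    -- linear independence unpacked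
    rw [linearIndependent_fin2] at hind
    simp only [Matrix.cons_val_one, Matrix.head_cons, Matrix.cons_val_zero] at hind
    obtain ⟨hY0, hnosc⟩ := hind
    by_cases hA0 : A = 0
    · -- then B = 0 too, contradicting linear independence
      have hB0 : B = 0 := by rw [← h1, hA0, zero_pow (by positivity), mul_zero]
      have hA0' : φ x₁ * y = φ y₁ * x := by
        have := CharTwo.add_eq_iff_eq_add.mp hA0
        simpa using this
      by_cases hy1 : y₁ = 0
      · by_cases hy : y = 0
        · exact hY0 (Prod.ext hy hy1)
        · have hx1 : x₁ = 0 := by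
            have : φ x₁ * y = 0 := by rw [hA0', hy1, map_zero, zero_mul]
            rcases mul_eq_zero.mp this with h | h
            · exact (map_eq_zero φ).mp h
            · exact absurd h hy
          have hB0' : x * y ^ q = x ^ q * y := by
            have := CharTwo.add_eq_iff_eq_add.mp hB0
            simpa using this
          have hz : (x * y⁻¹) ^ q = x * y⁻¹ := by
            have hyq : y ^ q ≠ 0 := pow_ne_zero _ hy
            field_simp
            rw [div_pow]
            field_simp
            linear_combination -hB0'
          obtain ⟨c, hc⟩ := fixed_mem_range he hK _ hz
          refine hnosc c (Prod.ext ?_ ?_)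
          · show c • y = x
            rw [Algebra.smul_def, ← hφ, hc]
            field_simp
          · show c * y₁ = x₁
            rw [hy1, hx1, mul_zero]
      · refine hnosc (x₁ * y₁⁻¹) (Prod.ext ?_ ?_)
        · show (x₁ * y₁⁻¹) • y = x
          rw [Algebra.smul_def, ← hφ, map_mul]
          have hφy1 : φ y₁ ≠ 0 := fun h => hy1 ((map_eq_zero φ).mp h)
          rw [map_inv₀]
          field_simp
          linear_combination hA0'
        · show x₁ * y₁⁻¹ * y₁ = x₁
          field_simp
    · -- A ≠ 0 : Artin–Schreier argument forces x₁ = y₁ = 0, contradicting A ≠ 0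
      have hAq1 : A ^ (q + 1) ≠ 0 := pow_ne_zero _ hA0
      have hAqne : A ^ q ≠ 0 := pow_ne_zero _ hA0
      have key : ∀ (c₁ : K) (w : F), φ c₁ * B = w * A ^ q + w ^ q * A → c₁ = 0 := by
        intro c₁ w hw
        have h3 : φ (α * c₁) * A ^ (q + 1) = w * A ^ q + w ^ q * A := by
          rw [map_mul, mul_comm (φ α) (φ c₁), mul_assoc, h1, hw]
        set s : F := w * A⁻¹ with hsdef
        have hs : s ^ q + s = φ (α * c₁) := by
          refine mul_right_cancel₀ hAq1 ?_
          rw [h3, hsdef, mul_pow, inv_pow]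
          have e1 : (A ^ q)⁻¹ * A ^ (q + 1) = A := by
            rw [pow_succ, inv_mul_cancel_left₀ hAqne]
          have e2 : A⁻¹ * A ^ (q + 1) = A ^ q := by
            rw [pow_succ, mul_comm (A ^ q) A, inv_mul_cancel_left₀ hA0]
          rw [add_mul, mul_assoc, mul_assoc, e1, e2]
          ring
        have hac : α * c₁ = 0 := AS_in_K (k := k) hK hF _ s hs
        rcases mul_eq_zero.mp hac with h | h
        · exact absurd h hα0
        · exact h
      have hx1 : x₁ = 0 := by
        refine key x₁ x ?_
        rw [hAq, hA, hB]
        linear_combination (-(φ y₁ * x ^ q * x)) * h2F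
      have hy1 : y₁ = 0 := by
        refine key y₁ y ?_
        rw [hAq, hA, hB]
        linear_combination (-(φ x₁ * y ^ q * y)) * h2F
      apply hA0
      rw [hA, hx1, hy1, map_zero, zero_mul, zero_mul, add_zero]
  -- injectivity
  have hinj : Function.Injective f := by
    intro a b hab
    have h0 : f (a + b) = 0 := by
      rw [← hadd, hab, CharTwo.add_self_eq_zero]
    have hab0 : a + b = 0 := hker _ h0
    have := eq_neg_of_add_eq_zero_left hab0
    rwa [CharTwo.neg_eq] at this
  constructor
  · rintro u ⟨a, rfl⟩ v ⟨b, rfl⟩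
    exact ⟨a + b, (hadd a b).symm⟩
  · rw [← Set.image_univ, Set.ncard_image_of_injective _ hinj, Set.ncard_univ,
      Nat.card_eq_fintype_card, hK]
end

section
/- Let q = 2^e, k ≥ 1, and x ∈ F_{q^{2k+1}}, x ≠ 0. For distinct a, b ∈ F_q, the sets { a^2 x^{q+1} + x y^q + x^q y : y ∈ F_{q^{2k+1}} } and { b^2 x^{q+1} + x y^q + x^q y : y ∈ F_{q^{2k+1}} } are disjoint. -/
/-- For `q = 2^e`, `x ≠ 0` in `F_{q^{2k+1}}` and distinct `a, b ∈ F_q`, the sets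
`{a²x^{q+1} + xy^q + x^q y : y}` and `{b²x^{q+1} + xy^q + x^q y : y}` are disjoint. -/
theorem images_disjoint (e k : ℕ) (he : 1 ≤ e) (hk : 1 ≤ k)
    (K F : Type) [Field K] [Field F] [Algebra K F] [Fintype K] [Fintype F]
    (hK : Fintype.card K = 2 ^ e) (hF : Fintype.card F = (2 ^ e) ^ (2 * k + 1))
    (x : F) (hx : x ≠ 0) (a b : K) (hab : a ≠ b) :
    Disjoint
      (Set.range fun y : F =>
        algebraMap K F (a ^ 2) * x ^ (2 ^ e + 1) + x * y ^ (2 ^ e) + x ^ (2 ^ e) * y)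
      (Set.range fun y : F =>
        algebraMap K F (b ^ 2) * x ^ (2 ^ e + 1) + x * y ^ (2 ^ e) + x ^ (2 ^ e) * y) := by
  -- characteristic 2 for F and K
  have hcardF : Fintype.card F = 2 ^ (e * (2 * k + 1)) := by rw [hF, ← pow_mul]
  have char2 : ∀ (R : Type) [Field R] [Fintype R] (m : ℕ), 0 < m →
      Fintype.card R = 2 ^ m → CharP R 2 := by
    intro R _ _ m hm hcard
    obtain ⟨p, hc⟩ := CharP.exists R
    haveI := hc
    have hp : p.Prime := CharP.char_is_prime R p
    obtain ⟨n, hn1, hn2⟩ := FiniteField.card R p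
    have hdvd : p ∣ 2 ^ m := by
      rw [← hcard, hn2]
      exact dvd_pow_self p n.2.ne'
    have : p = 2 := by
      have := (Nat.prime_dvd_prime_iff_eq hp Nat.prime_two).mp
        (hp.dvd_of_dvd_pow hdvd)
      exact this
    rwa [this] at hc
  haveI hF2 : CharP F 2 := char2 F (e * (2 * k + 1))
    (by positivity) hcardF
  haveI hK2 : CharP K 2 := char2 K e he hK
  set q : ℕ := 2 ^ e with hq
  set n : ℕ := 2 * k + 1 with hn
  -- the "trace-like" map S
  set S : F → F := fun t => ∑ i ∈ Finset.range n, t ^ 2 ^ (e * i) with hS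
  have hpow_q : ∀ (t : F) (i : ℕ), (t ^ q) ^ 2 ^ (e * i) = t ^ 2 ^ (e * (i + 1)) := by
    intro t i
    rw [← pow_mul, hq, ← pow_add]
    ring_nf
  have hpow_top : ∀ t : F, t ^ 2 ^ (e * n) = t := by
    intro t
    rw [← hcardF]
    exact FiniteField.pow_card t
  -- S kills t^q + t
  have hSkill : ∀ t : F, S (t ^ q + t) = 0 := by
    intro t
    have : S (t ^ q + t) = ∑ i ∈ Finset.range n,
        (t ^ 2 ^ (e * (i + 1)) - t ^ 2 ^ (e * i)) := by
      apply Finset.sum_congr rfl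
      intro i _
      rw [add_pow_char_pow, hpow_q, ← CharTwo.sub_eq_add]
    rw [this, Finset.sum_range_sub (fun i => t ^ 2 ^ (e * i)), hpow_top,
      mul_zero, pow_zero, pow_one, sub_self]
  -- S fixes elements of K
  have hSfix : ∀ c : K, S (algebraMap K F c) = algebraMap K F c := by
    intro c
    have hconst : ∀ i : ℕ, (algebraMap K F c) ^ 2 ^ (e * i) = algebraMap K F c := by
      intro i
      rw [← map_pow]
      congr 1
      have : c ^ 2 ^ (e * i) = c ^ (Fintype.card K) ^ i := by rw [hK, ← pow_mul]
      rw [this, FiniteField.pow_card_pow]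
    have : S (algebraMap K F c) = n • algebraMap K F c := by
      rw [hS]
      simp only [hconst]
      rw [Finset.sum_const, Finset.card_range]
    rw [this, nsmul_eq_mul, hn]
    push_cast
    have h2 : (2 : F) = 0 := by
      have := CharP.cast_eq_zero F 2
      exact_mod_cast this
    rw [h2]
    ring
  -- main argument
  rw [Set.disjoint_left]
  rintro v ⟨y, hy⟩ ⟨z, hz⟩
  -- derive the key identity
  have key : algebraMap K F ((a - b) ^ 2) * x ^ (q + 1)
      = x * (z - y) ^ q + x ^ q * (z - y) := by
    have h := hy.trans hz.symm
    simp only [] at h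
    have hab2 : (a - b) ^ 2 = a ^ 2 - b ^ 2 := by
      rw [sub_pow_char]
    rw [hab2, map_sub, sub_mul, sub_pow_char_pow]
    linear_combination h
  set u : F := z - y with hu
  set t : F := u / x with ht
  have hxq1 : x ^ (q + 1) ≠ 0 := pow_ne_zero _ hx
  have key2 : algebraMap K F ((a - b) ^ 2) = t ^ q + t := by
    have hux : u = t * x := by rw [ht]; exact (div_mul_cancel₀ u hx).symm
    have : algebraMap K F ((a - b) ^ 2) * x ^ (q + 1)
        = (t ^ q + t) * x ^ (q + 1) := by
      rw [key, hux, mul_pow]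
      ring
    exact mul_right_cancel₀ hxq1 this
  have hzero : algebraMap K F ((a - b) ^ 2) = 0 := by
    rw [← hSfix ((a - b) ^ 2), key2, hSkill]
  have : (a - b) ^ 2 = 0 := by
    exact (map_eq_zero _).mp hzero
  exact hab (sub_eq_zero.mp (pow_eq_zero_iff two_ne_zero |>.mp this))
end

section
/- Let q = 2^e, k ≥ 1, and x̄ = (x, x_1) a nonzero vector in V = F_{q^{2k+1}} × F_q. Then the map ȳ ↦ g(x̄, ȳ) = (x_1 y + y_1 x)^{q+1} + x y^q + x^q y from V to F_{q^{2k+1}} is surjective. -/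
private lemma coprime_aux (q n : ℕ) (hq : 2 ≤ q) (hqe : Even q) (hn : Odd n) :
    Nat.Coprime (q + 1) (q ^ n - 1) := by
  have hq1 : 1 ≤ q ^ n := Nat.one_le_pow _ _ (by omega)
  set d := Nat.gcd (q + 1) (q ^ n - 1) with hd
  have hd1 : d ∣ q + 1 := Nat.gcd_dvd_left _ _
  have hd2 : d ∣ q ^ n - 1 := Nat.gcd_dvd_right _ _
  have hdvd : q + 1 ∣ q ^ n + 1 := by
    simpa only [one_pow] using hn.nat_add_dvd_pow_add_pow q 1
  have hd3 : d ∣ q ^ n + 1 := hd1.trans hdvd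
  have hd4 : d ∣ 2 := by
    have h0 := Nat.dvd_sub hd3 hd2
    have h : q ^ n + 1 - (q ^ n - 1) = 2 := by omega
    rwa [h] at h0
  have hodd : ¬ 2 ∣ q + 1 := by
    rcases hqe with ⟨m, hm⟩; omega
  rcases (Nat.prime_two).eq_one_or_self_of_dvd _ hd4 with h | h
  · exact h
  · exact absurd (h ▸ hd1) hodd

private lemma pow_surj (F : Type) [Field F] [Fintype F] (n : ℕ) (hn : n ≠ 0)
    (h : Nat.Coprime (Fintype.card F - 1) n) : Function.Surjective (fun w : F => w ^ n) := by
  classical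
  intro u
  by_cases hu : u = 0
  · exact ⟨0, by simp [hu, zero_pow hn]⟩
  · have h' : (Nat.card Fˣ).Coprime n := by
      rwa [Nat.card_eq_fintype_card, Fintype.card_units]
    obtain ⟨w, hw⟩ := (powCoprime h').surjective (Units.mk0 u hu)
    exact ⟨(w : F), by simpa [powCoprime] using congrArg Units.val hw⟩

private lemma char_two_of_card (F : Type) [Field F] [Fintype F] (N : ℕ) (hN : N ≠ 0)
    (h : Fintype.card F = 2 ^ N) : CharP F 2 := by
  have h2 : (2 : F) = 0 := by
    have := FiniteField.cast_card_eq_zero F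
    rw [h] at this
    push_cast at this
    exact pow_eq_zero_iff hN |>.mp this
  have hd : ringChar F ∣ 2 := ringChar.dvd h2
  have : ringChar F = 2 := by
    rcases (Nat.prime_two).eq_one_or_self_of_dvd _ hd with h1 | h1
    · exact absurd h1 (CharP.ringChar_ne_one)
    · exact h1
  rw [← this]; exact ringChar.charP F

private lemma psi_surj (e k : ℕ) (he : e ≠ 0)
    (K F : Type) [Field K] [Field F] [Algebra K F] [Fintype K] [Fintype F]
    (hK : Fintype.card K = 2 ^ e) (hF : Fintype.card F = (2 ^ e) ^ (2 * k + 1)) :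
    Function.Surjective (fun p : F × K =>
      p.1 ^ 2 ^ e + p.1 + (algebraMap K F p.2) ^ 2) := by
  classical
  haveI hCF : CharP F 2 := char_two_of_card F (e * (2 * k + 1)) (by positivity)
    (by rw [hF, ← pow_mul])
  have h2F : (2 : F) = 0 := by exact_mod_cast CharP.cast_eq_zero F 2
  have hqe : (2 : ℕ) ^ e ≠ 0 := by positivity
  have alg_pow : ∀ u : K, algebraMap K F u ^ 2 ^ e = algebraMap K F u := by
    intro u; rw [← map_pow, ← hK, FiniteField.pow_card]
  have nat_pow : ∀ n : ℕ, ((n : F)) ^ 2 ^ e = (n : F) := by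
    intro n; rw [← map_natCast (algebraMap K F), alg_pow]
  set ψ : F × K →+ F := {
    toFun := fun p => p.1 ^ 2 ^ e + p.1 + (algebraMap K F p.2) ^ 2
    map_zero' := by simp [zero_pow hqe]
    map_add' := by
      intro p p'
      simp only [Prod.fst_add, Prod.snd_add, map_add]
      rw [add_pow_char_pow p.1 p'.1 2 e, CharTwo.add_sq]
      ring } with hψ
  have hker : ∀ p : F × K, ψ p = 0 → p.2 = 0 ∧ p.1 ^ 2 ^ e = p.1 := by
    rintro ⟨t, u⟩ h
    simp only [hψ, AddMonoidHom.coe_mk, ZeroHom.coe_mk] at h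
    set a := algebraMap K F u with ha
    have htq : t ^ 2 ^ e = t + a ^ 2 := by linear_combination h - (t + a ^ 2) * h2F
    have key : ∀ m : ℕ, t ^ (2 ^ e) ^ m = t + (m : F) * a ^ 2 := by
      intro m
      induction m with
      | zero => simp
      | succ m ih =>
        have hstep : t ^ (2 ^ e) ^ (m + 1) = (t ^ (2 ^ e) ^ m) ^ 2 ^ e := by
          rw [pow_succ, pow_mul]
        have haq : (a ^ 2) ^ 2 ^ e = a ^ 2 := by
          rw [← pow_mul, mul_comm, pow_mul, alg_pow]
        rw [hstep, ih, add_pow_char_pow _ _ 2 e, htq, mul_pow, nat_pow, haq]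
        push_cast
        ring
    have hcard : t ^ (2 ^ e) ^ (2 * k + 1) = t := by
      rw [← hF]; exact FiniteField.pow_card t
    have ha2 : a ^ 2 = 0 := by
      have h1 := key (2 * k + 1)
      rw [hcard] at h1
      have h21 : ((2 * k + 1 : ℕ) : F) = 1 := by push_cast; linear_combination (k : F) * h2F
      rw [h21, one_mul] at h1
      linear_combination -h1
    have hu : u = 0 := by
      have : a = 0 := by
        have := pow_eq_zero_iff (n := 2) (by norm_num) |>.mp ha2
        exact this
      exact (map_eq_zero (algebraMap K F)).mp (ha ▸ this)
    refine ⟨hu, ?_⟩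
    rw [htq, ha2, add_zero]
  -- kernel cardinality bound
  have hkcard : Nat.card ψ.ker ≤ 2 ^ e := by
    set P : Polynomial F := Polynomial.X ^ 2 ^ e - Polynomial.X with hP
    have hPne : P ≠ 0 := FiniteField.X_pow_card_pow_sub_X_ne_zero F he one_lt_two
    have hdeg : P.natDegree = 2 ^ e :=
      FiniteField.X_pow_card_pow_sub_X_natDegree_eq F he one_lt_two
    have hmem : ∀ s : ψ.ker, (s : F × K).1 ∈ P.roots.toFinset := by
      rintro ⟨⟨t, u⟩, hs⟩
      have h := hker _ hs
      simp only [Multiset.mem_toFinset]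
      rw [Polynomial.mem_roots hPne]
      simp [hP, Polynomial.IsRoot, sub_eq_zero, h.2]
    have hinj : Function.Injective
        (fun s : ψ.ker => (⟨(s : F × K).1, hmem s⟩ : P.roots.toFinset)) := by
      rintro ⟨⟨t, u⟩, hs⟩ ⟨⟨t', u'⟩, hs'⟩ hh
      have h1 := (hker _ hs).1
      have h2 := (hker _ hs').1
      simp only [Subtype.mk_eq_mk] at hh ⊢
      exact Prod.ext hh (h1.trans h2.symm)
    calc Nat.card ψ.ker ≤ Nat.card P.roots.toFinset := Nat.card_le_card_of_injective _ hinj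
      _ = P.roots.toFinset.card := Nat.card_eq_finsetCard _
      _ ≤ Multiset.card P.roots := Multiset.toFinset_card_le _
      _ ≤ P.natDegree := Polynomial.card_roots' P
      _ = 2 ^ e := hdeg
  -- range is everything
  have hquot : Nat.card (F × K) = Nat.card ((F × K) ⧸ ψ.ker) * Nat.card ψ.ker :=
    AddSubgroup.card_eq_card_quotient_mul_card_addSubgroup _
  have hiso : Nat.card ((F × K) ⧸ ψ.ker) = Nat.card ψ.range :=
    Nat.card_congr (QuotientAddGroup.quotientKerEquivRange ψ).toEquiv
  have hcardFK : Nat.card (F × K) = (2 ^ e) ^ (2 * k + 1) * 2 ^ e := by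
    rw [Nat.card_eq_fintype_card, Fintype.card_prod, hF, hK]
  have hrange : (2 ^ e) ^ (2 * k + 1) ≤ Nat.card ψ.range := by
    have h1 : (2 ^ e) ^ (2 * k + 1) * 2 ^ e ≤ Nat.card ψ.range * 2 ^ e := by
      calc (2 ^ e) ^ (2 * k + 1) * 2 ^ e = Nat.card ψ.range * Nat.card ψ.ker := by
            rw [← hcardFK, hquot, hiso]
        _ ≤ Nat.card ψ.range * 2 ^ e := Nat.mul_le_mul_left _ hkcard
    exact Nat.le_of_mul_le_mul_right h1 (by positivity)
  have htop : ψ.range = ⊤ := by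
    apply AddSubgroup.eq_top_of_le_card
    rwa [Nat.card_eq_fintype_card, hF]
  intro c
  have : c ∈ ψ.range := by rw [htop]; trivial
  obtain ⟨p, hp⟩ := this
  exact ⟨p, hp⟩

/-- For `q = 2^e` and a nonzero vector `x̄ ∈ V = F_{q^{2k+1}} × F_q`, the map
`ȳ ↦ g(x̄, ȳ)` from `V` to `F_{q^{2k+1}}` is surjective. -/
theorem gfun_surjective (e k : ℕ) (he : 1 ≤ e) (hk : 1 ≤ k)
    (K F : Type) [Field K] [Field F] [Algebra K F] [Fintype K] [Fintype F]
    (hK : Fintype.card K = 2 ^ e) (hF : Fintype.card F = (2 ^ e) ^ (2 * k + 1))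
    (xb : F × K) (hxb : xb ≠ 0) :
    Function.Surjective (fun yb : F × K => gfun K F (2 ^ e) xb yb) := by
  classical
  have he' : e ≠ 0 := by omega
  haveI hCF : CharP F 2 := char_two_of_card F (e * (2 * k + 1)) (by positivity)
    (by rw [hF, ← pow_mul])
  have h2F : (2 : F) = 0 := by exact_mod_cast CharP.cast_eq_zero F 2
  have alg_pow : ∀ u : K, algebraMap K F u ^ 2 ^ e = algebraMap K F u := by
    intro u; rw [← map_pow, ← hK, FiniteField.pow_card]
  obtain ⟨x, x₁⟩ := xb
  intro c
  by_cases hx1 : x₁ = 0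
  · -- case x₁ = 0, so x ≠ 0
    have hx : x ≠ 0 := by
      rintro rfl
      exact hxb (by simp [hx1, Prod.ext_iff])
    obtain ⟨⟨t, u⟩, ht⟩ := psi_surj e k he' K F hK hF (c / x ^ (2 ^ e + 1))
    simp only at ht
    refine ⟨(x * t, u), ?_⟩
    simp only [gfun, hx1, map_zero, zero_mul, zero_add]
    set A := algebraMap K F u with hA
    have hApow : A ^ (2 ^ e + 1) = A ^ 2 := by
      rw [pow_succ, alg_pow, sq]
    have ht' : (t ^ 2 ^ e + t + A ^ 2) * (x ^ 2 ^ e * x) = c := by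
      rw [ht, ← pow_succ, div_mul_cancel₀ _ (pow_ne_zero _ hx)]
    rw [mul_pow A x (2 ^ e + 1), hApow, pow_succ x (2 ^ e), mul_pow x t (2 ^ e)]
    linear_combination ht'
  · -- case x₁ ≠ 0
    have hne : algebraMap K F x₁ ≠ 0 := fun h => hx1 ((map_eq_zero _).mp h)
    set l : F := (algebraMap K F x₁)⁻¹ with hl
    have hlq : l ^ 2 ^ e = l := by
      rw [hl, inv_pow, alg_pow]
    have hcop : Nat.Coprime (Fintype.card F - 1) (2 ^ e + 1) := by
      rw [hF]
      exact (coprime_aux (2 ^ e) (2 * k + 1)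
        (by calc (2:ℕ) = 2 ^ 1 := (pow_one 2).symm
              _ ≤ 2 ^ e := Nat.pow_le_pow_right (by norm_num) he)
        (Nat.even_pow.mpr ⟨even_iff_two_dvd.mpr dvd_rfl, he'⟩) ⟨k, by ring⟩).symm
    obtain ⟨w, hw⟩ := pow_surj F (2 ^ e + 1) (by positivity) hcop
      (c + (l * x) ^ (2 ^ e + 1))
    simp only at hw
    refine ⟨(l * (w + l * x), 0), ?_⟩
    simp only [gfun, map_zero, zero_mul, add_zero]
    have hcancel : algebraMap K F x₁ * (l * (w + l * x)) = w + l * x := by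
      rw [← mul_assoc, hl, mul_inv_cancel₀ hne, one_mul]
    rw [hcancel]
    have hfresh : (w + l * x) ^ 2 ^ e = w ^ 2 ^ e + l * x ^ 2 ^ e := by
      rw [add_pow_char_pow w (l * x) 2 e, mul_pow, hlq]
    have hw' : w ^ 2 ^ e * w = c + (l * x ^ 2 ^ e) * (l * x) := by
      rw [← pow_succ, hw, pow_succ (l * x), mul_pow, hlq]
    rw [pow_succ (w + l * x) (2 ^ e), hfresh, mul_pow l (w + l * x) (2 ^ e), hlq, hfresh]
    linear_combination hw' + (l * x * w ^ 2 ^ e + l * x ^ 2 ^ e * w + 2 * l * l * x ^ 2 ^ e * x) * h2F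
end

section
/- Let q = 2^e, k ≥ 1, and let x̄, ȳ, z̄ be nonzero vectors in V = F_{q^{2k+1}} × F_q such that S_1 = span(x̄, ȳ) and S_2 = span(x̄, z̄) are distinct 2-dimensional F_q-subspaces. Then the sets g(S_1) = {g(ū, v̄) : ū, v̄ ∈ S_1} and g(S_2) = {g(ū, v̄) : ū, v̄ ∈ S_2}, which are F_2-subspaces of F_{q^{2k+1}}, intersect only in 0. -/
section Aux

lemma idC (F : Type) [Field F] [CharP F 2] (e : ℕ) (x y X Y A B C D : F)
    (hX : X^(2^e) = X) (hY : Y^(2^e) = Y) (hA : A^(2^e) = A) (hB : B^(2^e) = B)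
    (hC : C^(2^e) = C) (hD : D^(2^e) = D) :
    ((A*X+B*Y)*(C*x+D*y) + (C*X+D*Y)*(A*x+B*y))^(2^e+1)
      + (A*x+B*y)*(C*x+D*y)^(2^e) + (A*x+B*y)^(2^e)*(C*x+D*y)
    = (X*((A*D+B*C)*y) + (A*D+B*C)*Y*x)^(2^e+1)
      + x*((A*D+B*C)*y)^(2^e) + x^(2^e)*((A*D+B*C)*y) := by
  have hfa : ∀ a b : F, (a+b)^(2^e) = a^(2^e)+b^(2^e) := fun a b => add_pow_char_pow a b 2 e
  have h2 : (2:F) = 0 := CharTwo.two_eq_zero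
  have h4 : (4:F) = 0 := by rw [show (4:F) = 2*2 by norm_num, h2]; ring
  have h6 : (6:F) = 0 := by rw [show (6:F) = 2*3 by norm_num, h2]; ring
  have h8 : (8:F) = 0 := by rw [show (8:F) = 2*4 by norm_num, h2]; ring
  simp only [pow_succ, hfa, mul_pow, hX, hY, hA, hB, hC, hD]
  ring_nf
  simp only [h2, h4, h6, h8, mul_zero, zero_mul, add_zero, zero_add]
  try ring_nf

lemma idE (F : Type) [Field F] [CharP F 2] (e : ℕ) (x u X U : F)
    (hX : X^(2^e) = X) (hU : U^(2^e) = U) :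
    X^2 * ((X*u + U*x)^(2^e+1) + x*u^(2^e) + x^(2^e)*u)
      = (X*(X*u + U*x) + x)^(2^e+1) + x^(2^e+1) := by
  have hfa : ∀ a b : F, (a+b)^(2^e) = a^(2^e)+b^(2^e) := fun a b => add_pow_char_pow a b 2 e
  have h2 : (2:F) = 0 := CharTwo.two_eq_zero
  have h4 : (4:F) = 0 := by rw [show (4:F) = 2*2 by norm_num, h2]; ring
  simp only [pow_succ, hfa, mul_pow, hX, hU]
  ring_nf
  simp only [h2, h4, mul_zero, zero_mul, add_zero, zero_add]
  try ring_nf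

lemma gcalc (e : ℕ) (K F : Type) [Field K] [Field F] [Algebra K F] [CharP F 2]
    (hfix : ∀ a : K, (algebraMap K F a)^(2^e) = algebraMap K F a)
    (xb yb : F × K) (a b c d : K) :
    gfun K F (2^e) (a•xb+b•yb) (c•xb+d•yb) = gfun K F (2^e) xb ((a*d+b*c)•yb) := by
  have hsm : ∀ (a:K) (f:F), a • f = algebraMap K F a * f := fun a f => Algebra.smul_def a f
  simp only [gfun, Prod.fst_add, Prod.snd_add, Prod.smul_fst, Prod.smul_snd,
    hsm, smul_eq_mul, map_add, map_mul]
  exact idC F e xb.1 yb.1 (algebraMap K F xb.2) (algebraMap K F yb.2) (algebraMap K F a)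
    (algebraMap K F b) (algebraMap K F c) (algebraMap K F d) (hfix _) (hfix _) (hfix _)
    (hfix _) (hfix _) (hfix _)

lemma gzero (e : ℕ) (K F : Type) [Field K] [Field F] [Algebra K F] (xb : F × K) :
    gfun K F (2^e) xb 0 = 0 := by
  have h : (2:ℕ)^e + 1 ≠ 0 := by positivity
  simp [gfun, zero_pow h, zero_pow (by positivity : (2:ℕ)^e ≠ 0)]

lemma fixq (F : Type) [Field F] [Fintype F] (e k : ℕ)
    (hF : Fintype.card F = (2^e)^(2*k+1)) (t : F) (h : (t^(2^e))^(2^e) = t) :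
    t^(2^e) = t := by
  have h' : t^(2^e * 2^e) = t := by rw [pow_mul]; exact h
  have hgen : ∀ m : ℕ, t^((2^e * 2^e)^m) = t := by
    intro m
    induction m with
    | zero => simp
    | succ n ih => rw [pow_succ, pow_mul, ih, h']
  have hcard : t^((2^e)^(2*k+1)) = t := by rw [← hF]; exact FiniteField.pow_card t
  calc t^(2^e) = (t^((2^e)^(2*k+1)))^(2^e) := by rw [hcard]
    _ = t^((2^e)^(2*k+1) * 2^e) := by rw [← pow_mul]
    _ = t^((2^e * 2^e)^(k+1)) := by rw [show (2^e : ℕ)^(2*k+1) * 2^e = (2^e * 2^e)^(k+1) by ring]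
    _ = t := hgen (k+1)

lemma ninj (F : Type) [Field F] [Fintype F] [CharP F 2] (e k : ℕ)
    (hF : Fintype.card F = (2^e)^(2*k+1)) (a b : F) (h : a^(2^e+1) = b^(2^e+1)) : a = b := by
  have hne : (2:ℕ)^e + 1 ≠ 0 := by positivity
  by_cases hb : b = 0
  · subst hb
    rw [zero_pow hne, pow_eq_zero_iff hne] at h
    simp [h]
  · have ha : a ≠ 0 := by
      intro ha0
      subst ha0
      rw [zero_pow hne] at h
      exact hb (by rwa [eq_comm, pow_eq_zero_iff hne] at h)
    set t : F := a / b with htdef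
    have ht : t^(2^e+1) = 1 := by
      rw [htdef, div_pow, h, div_self (pow_ne_zero _ hb)]
    have htq : t^(2^e) = t⁻¹ := by
      have := ht
      rw [pow_succ] at this
      exact eq_inv_of_mul_eq_one_left this
    have h2 : (t^(2^e))^(2^e) = t := by
      rw [htq, inv_pow, htq, inv_inv]
    have hfx : t^(2^e) = t := fixq F e k hF t h2
    have htn : t ≠ 0 := div_ne_zero ha hb
    have ht2 : t * t = 1 := by
      have hti : t⁻¹ = t := by rw [← htq, hfx]
      calc t * t = t * t⁻¹ := by rw [hti]
        _ = 1 := mul_inv_cancel₀ htn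
    have ht1 : t = 1 := by
      have hsq : (t - 1)^2 = 0 := by
        have h2' : (2:F) = 0 := CharTwo.two_eq_zero
        linear_combination ht2 - (t-1)*h2'
      have h0 := pow_eq_zero_iff (n := 2) (by norm_num) |>.mp hsq
      have := sub_eq_zero.mp h0
      exact this
    rw [htdef] at ht1
    exact (div_eq_one_iff_eq hb).mp ht1

end Aux

section Aux2
open Polynomial

lemma fixmem (K F : Type) [Field K] [Field F] [Algebra K F] [Fintype K] (e : ℕ)
    (he : 1 ≤ e) (hK : Fintype.card K = 2^e) (t : F) (ht : t^(2^e) = t) :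
    ∃ a : K, algebraMap K F a = t := by
  classical
  by_contra hc
  push_neg at hc
  have hlt : 1 < 2^e := by
    calc 1 < 2 := one_lt_two
      _ ≤ 2^e := Nat.le_self_pow (by omega) 2
  set f : F[X] := X^(2^e) - X with hfdef
  have hf0 : f ≠ 0 := FiniteField.X_pow_card_sub_X_ne_zero F hlt
  have hdeg : f.natDegree = 2^e := FiniteField.X_pow_card_sub_X_natDegree_eq F hlt
  set Z : Finset F := insert t (Finset.univ.image (algebraMap K F)) with hZdef
  have hroot : ∀ z ∈ Z, z ∈ f.roots := by
    intro z hz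
    rw [mem_roots hf0]
    rw [hZdef, Finset.mem_insert] at hz
    have : z^(2^e) = z := by
      rcases hz with rfl | hz
      · exact ht
      · obtain ⟨a, _, rfl⟩ := Finset.mem_image.mp hz
        rw [← map_pow, ← hK, FiniteField.pow_card]
    simp [hfdef, IsRoot, sub_eq_zero, this]
  have hsub : Z.val ⊆ f.roots := fun z hz => hroot z (Finset.mem_def.mpr hz)
  have hcard := Polynomial.card_le_degree_of_subset_roots hsub
  have hnotmem : t ∉ Finset.univ.image (algebraMap K F) := by
    simp only [Finset.mem_image, Finset.mem_univ, true_and]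
    rintro ⟨a, ha⟩
    exact hc a ha
  have hZ : Z.card = 2^e + 1 := by
    rw [hZdef, Finset.card_insert_of_notMem hnotmem,
      Finset.card_image_of_injective _ (algebraMap K F).injective, Finset.card_univ, hK]
  rw [hZ, hdeg] at hcard
  omega

lemma coset (e k : ℕ) (he : 1 ≤ e) (K F : Type) [Field K] [Field F] [Algebra K F]
    [Fintype K] [Fintype F] [CharP F 2]
    (hK : Fintype.card K = 2^e) (hF : Fintype.card F = (2^e)^(2*k+1))
    (xb : F × K) (hx : xb ≠ 0) (u v : F × K)
    (H : gfun K F (2^e) xb u = gfun K F (2^e) xb v) : ∃ c : K, v = u + c • xb := by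
  have hfix : ∀ a : K, (algebraMap K F a)^(2^e) = algebraMap K F a := fun a => by
    rw [← map_pow, ← hK, FiniteField.pow_card]
  have hfa : ∀ a b : F, (a+b)^(2^e) = a^(2^e)+b^(2^e) := fun a b => add_pow_char_pow a b 2 e
  by_cases hx2 : xb.2 = 0
  · -- x₁ = 0 case
    have hx1 : xb.1 ≠ 0 := by
      intro h1
      exact hx (Prod.ext h1 hx2)
    set x := xb.1 with hxdef
    set t : F := (u.1 - v.1) / x with htdef
    have hu1 : u.1 = v.1 + t * x := by
      rw [htdef]; field_simp; ring
    simp only [gfun, hx2, map_zero, zero_mul, zero_add] at H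
    rw [hu1] at H
    set U := algebraMap K F u.2 with hU
    set V := algebraMap K F v.2 with hV
    have hUq : U^(2^e) = U := hfix u.2
    have hVq : V^(2^e) = V := hfix v.2
    have key : (U - V)^2 = t^(2^e) + t := by
        have h2' : (2:F) = 0 := CharTwo.two_eq_zero
        have hexp : ∀ w : F, w ^ (2^e+1) = w^(2^e) * w := fun w => pow_succ w (2^e)
        rw [hexp, hexp] at H
        rw [mul_pow, mul_pow, hfa, mul_pow, hUq, hVq] at H
        have hxne : x^(2^e) * x ≠ 0 := mul_ne_zero (pow_ne_zero _ hx1) hx1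
        apply mul_left_cancel₀ hxne
        linear_combination H - ((x^(2^e)*x)*(t^(2^e) + t + (U-V)*V) + U*x^(2^e)*x*(V) + x*v.1^(2^e) + x^(2^e)*v.1 + x^(2^e)*x*t) * h2'
          + (x*x^(2^e)*U*V - x*x^(2^e)*v.1*x⁻¹ + x*x^(2^e)*u.1*x⁻¹ + x*v.1^(2^e) + x^(2^e)*v.1) * h2'
    have htq : t^(2^e) = t := by
      have key2 : (t^(2^e))^(2^e) = t := by
        have := congrArg (fun w => w^(2^e)) key
        simp only [hfa, mul_pow] at this
        -- this : ((U-V)^2)^(2^e) = (t^(2^e))^(2^e) + t^(2^e)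
        have hUV : ((U - V)^2)^(2^e) = (U-V)^2 := by
          rw [← pow_mul, mul_comm 2 (2^e), pow_mul, CharTwo.sub_eq_add, hfa, hUq, hVq]
        rw [hUV, key] at this
        -- this : t^(2^e) + t = (t^(2^e))^(2^e) + t^(2^e)
        have := add_right_cancel (a := t) (b := t^(2^e)) (c := (t^(2^e))^(2^e))
          (by rw [add_comm] at this ⊢; linear_combination this)
        exact this.symm
      exact fixq F e k hF t key2
    have hUV0 : U = V := by
      have : (U - V)^2 = 0 := by
        rw [key, htq, CharTwo.add_self_eq_zero]
      have := pow_eq_zero_iff (n := 2) (by norm_num) |>.mp this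
      exact sub_eq_zero.mp this
    obtain ⟨a, ha⟩ := fixmem K F e he hK t htq
    refine ⟨-a, ?_⟩
    have h22 : u.2 = v.2 := (algebraMap K F).injective (by rw [← hU, ← hV, hUV0])
    apply Prod.ext
    · simp only [Prod.fst_add, Prod.smul_fst]
      rw [Algebra.smul_def, map_neg, ha, ← hxdef]
      have : v.1 = u.1 - t * x := by rw [hu1]; ring
      rw [this]; ring
    · simp only [Prod.snd_add, Prod.smul_snd, smul_eq_mul, hx2, mul_zero, add_zero]
      exact h22.symm
  · -- x₁ ≠ 0 case
    set X := algebraMap K F xb.2 with hXdef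
    have hX0 : X ≠ 0 := fun h0 => hx2 ((algebraMap K F).injective (by rw [← hXdef, h0, map_zero]))
    have hgx : ∀ w : F × K, X^2 * gfun K F (2^e) xb w
        = (X*(X*w.1 + algebraMap K F w.2 * xb.1) + xb.1)^(2^e+1) + xb.1^(2^e+1) := fun w => by
      simp only [gfun, ← hXdef]
      exact idE F e xb.1 w.1 X (algebraMap K F w.2) (hfix _) (hfix _)
    have H2 : (X*(X*u.1 + algebraMap K F u.2 * xb.1) + xb.1)^(2^e+1) + xb.1^(2^e+1)
        = (X*(X*v.1 + algebraMap K F v.2 * xb.1) + xb.1)^(2^e+1) + xb.1^(2^e+1) := by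
      rw [← hgx, ← hgx, H]
    have H3 := add_right_cancel H2
    have H4 := ninj F e k hF _ _ H3
    have H5 := add_right_cancel H4
    have hL : X*u.1 + algebraMap K F u.2 * xb.1 = X*v.1 + algebraMap K F v.2 * xb.1 :=
      mul_left_cancel₀ hX0 H5
    have h2K : (2:K) = 0 := by
      have hc := FiniteField.cast_card_eq_zero K
      rw [hK] at hc
      push_cast at hc
      exact pow_eq_zero_iff (by omega : e ≠ 0) |>.mp hc
    refine ⟨(u.2 - v.2)/xb.2, ?_⟩
    apply Prod.ext
    · simp only [Prod.fst_add, Prod.smul_fst]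
      rw [Algebra.smul_def, map_div₀, map_sub, ← hXdef]
      have hsub : v.1 - u.1 = ((algebraMap K F u.2 - algebraMap K F v.2) * xb.1)/X := by
        rw [eq_div_iff hX0]
        linear_combination -hL
      linear_combination hsub
    · simp only [Prod.snd_add, Prod.smul_snd, smul_eq_mul]
      rw [div_mul_cancel₀ _ hx2]
      linear_combination (v.2 - u.2) * h2K

end Aux2

/-- If `S₁ = span(x̄,ȳ)` and `S₂ = span(x̄,z̄)` are distinct 2-dimensional subspaces of
`V = F_{q^{2k+1}} × F_q` through a common nonzero vector `x̄`, then
`g(S₁) ∩ g(S₂) = {0}`. -/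
theorem gfun_images_meet_trivially (e k : ℕ) (he : 1 ≤ e) (hk : 1 ≤ k)
    (K F : Type) [Field K] [Field F] [Algebra K F] [Fintype K] [Fintype F]
    (hK : Fintype.card K = 2 ^ e) (hF : Fintype.card F = (2 ^ e) ^ (2 * k + 1))
    (xb yb zb : F × K) (hx : xb ≠ 0) (hy : yb ≠ 0) (hz : zb ≠ 0)
    (S₁ S₂ : Submodule K (F × K))
    (hS₁ : S₁ = Submodule.span K {xb, yb}) (hS₂ : S₂ = Submodule.span K {xb, zb})
    (hd₁ : Module.finrank K S₁ = 2) (hd₂ : Module.finrank K S₂ = 2)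
    (hne : S₁ ≠ S₂) :
    {w : F | ∃ u ∈ S₁, ∃ v ∈ S₁, gfun K F (2 ^ e) u v = w} ∩
        {w : F | ∃ u ∈ S₂, ∃ v ∈ S₂, gfun K F (2 ^ e) u v = w} = {0} := by
  have h2F : (2:F) = 0 := by
    have hc := FiniteField.cast_card_eq_zero F
    rw [hF] at hc
    push_cast at hc
    have h1 := pow_eq_zero_iff (n := 2*k+1) (by omega) |>.mp hc
    exact pow_eq_zero_iff (by omega : e ≠ 0) |>.mp h1
  haveI : CharP F 2 := CharTwo.of_one_ne_zero_of_two_eq_zero one_ne_zero h2F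
  have hfix : ∀ a : K, (algebraMap K F a)^(2^e) = algebraMap K F a := fun a => by
    rw [← map_pow, ← hK, FiniteField.pow_card]
  ext w
  simp only [Set.mem_inter_iff, Set.mem_setOf_eq, Set.mem_singleton_iff]
  constructor
  · rintro ⟨⟨u1, hu1, v1, hv1, huv1⟩, ⟨u2, hu2, v2, hv2, huv2⟩⟩
    by_contra hw0
    rw [hS₁] at hu1 hv1
    rw [hS₂] at hu2 hv2
    obtain ⟨a1, b1, hab1⟩ := Submodule.mem_span_pair.mp hu1
    obtain ⟨c1, d1, hcd1⟩ := Submodule.mem_span_pair.mp hv1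
    obtain ⟨a2, b2, hab2⟩ := Submodule.mem_span_pair.mp hu2
    obtain ⟨c2, d2, hcd2⟩ := Submodule.mem_span_pair.mp hv2
    set α := a1*d1 + b1*c1 with hαdef
    set β := a2*d2 + b2*c2 with hβdef
    have hw1 : gfun K F (2^e) xb (α • yb) = w := by
      rw [← huv1, ← hab1, ← hcd1, gcalc e K F hfix]
    have hw2 : gfun K F (2^e) xb (β • zb) = w := by
      rw [← huv2, ← hab2, ← hcd2, gcalc e K F hfix]
    have hβ : β ≠ 0 := by
      intro h0
      rw [h0, zero_smul] at hw2
      exact hw0 (by rw [← hw2, gzero])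
    obtain ⟨c, hc⟩ := coset e k he K F hK hF xb hx (α • yb) (β • zb) (hw1.trans hw2.symm)
    have hzb : zb = (β⁻¹ * c) • xb + (β⁻¹ * α) • yb := by
      have h := congrArg (fun p => β⁻¹ • p) hc
      simp only [smul_smul, smul_add, inv_mul_cancel₀ hβ, one_smul] at h
      rw [h]
      rw [add_comm]
    have hzb1 : zb ∈ S₁ := by
      rw [hS₁]
      exact Submodule.mem_span_pair.mpr ⟨β⁻¹ * c, β⁻¹ * α, hzb.symm⟩
    have hxb1 : xb ∈ S₁ := by
      rw [hS₁]
      exact Submodule.subset_span (by simp)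
    have hle : S₂ ≤ S₁ := by
      rw [hS₂]
      apply Submodule.span_le.mpr
      rw [Set.insert_subset_iff, Set.singleton_subset_iff]
      exact ⟨hxb1, hzb1⟩
    haveI : Module.Finite K (F × K) := Module.finite_iff_finite.mpr inferInstance
    exact hne (Submodule.eq_of_le_of_finrank_eq hle (hd₂.trans hd₁.symm)).symm
  · rintro rfl
    exact ⟨⟨0, zero_mem _, 0, zero_mem _, gzero e K F 0⟩,
      0, zero_mem _, 0, zero_mem _, gzero e K F 0⟩
end
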